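/- For every probability measure Q on Ω, the penalty α(Q), defined as the supremum over all bounded measurable X : Ω → ℝ of ( ∫ (-X) dQ - ρ(X) ), is equal to the supremum taken only over return functions of positions: α(Q) = sup over positions S of ( ∫ (-X_S) dQ - ρ(X_S) ). -/
import Mathlib

open MeasureTheory

noncomputable section

/-- The set of possible price scenarios. -/
abbrev Omega (N : ℕ) (pmax : ℝ) : Type :=
  {p : Fin N → ℝ // ∀ i, 0 ≤ p i ∧ p i ≤ pmax}

/-- A position `S = (w, s)`: collected revenue `w ≥ 0` and remaining budgets `0 ≤ s i ≤ b i`. -/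
def IsPosition (N : ℕ) (b : Fin N → ℝ) (S : ℝ × (Fin N → ℝ)) : Prop :=
  0 ≤ S.1 ∧ ∀ i, 0 ≤ S.2 i ∧ S.2 i ≤ b i

/-- Return function of a position: `X_S(p) = w + ∑ i, p i * s i`. -/
def ret (N : ℕ) (pmax : ℝ) (S : ℝ × (Fin N → ℝ)) (p : Omega N pmax) : ℝ :=
  S.1 + ∑ i, p.1 i * S.2 i

/-- Generating function `θ(S) = -w - ∑ i, v i (s i)`. -/
def theta (N : ℕ) (v : Fin N → ℝ → ℝ) (S : ℝ × (Fin N → ℝ)) : ℝ :=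
  -S.1 - ∑ i, v i (S.2 i)

/-- Risk measure `ρ(X) = inf { θ(S) : S a position with X_S ≤ X pointwise }`, valued
in `ℝ ∪ {+∞}` (the infimum of the empty set is `+∞`). -/
def rho (N : ℕ) (b : Fin N → ℝ) (pmax : ℝ) (v : Fin N → ℝ → ℝ)
    (X : Omega N pmax → ℝ) : EReal :=
  sInf {t : EReal | ∃ S : ℝ × (Fin N → ℝ), IsPosition N b S ∧
    (∀ p, ret N pmax S p ≤ X p) ∧ t = ((theta N v S : ℝ) : EReal)}

/-- A bounded function on `Ω`. -/
def Bounded (N : ℕ) (pmax : ℝ) (X : Omega N pmax → ℝ) : Prop :=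
  ∃ C, ∀ p, |X p| ≤ C

/-- Penalty function `α(Q) = sup over bounded measurable X of (∫ (-X) dQ - ρ(X))`. -/
def alphaPen (N : ℕ) (b : Fin N → ℝ) (pmax : ℝ) (v : Fin N → ℝ → ℝ)
    (Q : Measure (Omega N pmax)) : EReal :=
  ⨆ X ∈ {X : Omega N pmax → ℝ | Measurable X ∧ Bounded N pmax X},
    (((∫ p, -X p ∂Q : ℝ) : EReal) - rho N b pmax v X)

lemma ret_measurable (N : ℕ) (pmax : ℝ) (S : ℝ × (Fin N → ℝ)) :
    Measurable (ret N pmax S) := by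
  unfold ret
  exact measurable_const.add (Finset.measurable_sum _ fun i _ =>
    ((measurable_pi_apply i).comp measurable_subtype_coe).mul_const _)

lemma ret_bounded (N : ℕ) (pmax : ℝ) (hpmax : 0 < pmax) (S : ℝ × (Fin N → ℝ)) :
    ∃ C, ∀ p : Omega N pmax, |ret N pmax S p| ≤ C := by
  refine ⟨|S.1| + ∑ i, pmax * |S.2 i|, fun p => ?_⟩
  refine (abs_add_le _ _).trans (add_le_add le_rfl ?_)
  refine (Finset.abs_sum_le_sum_abs _ _).trans (Finset.sum_le_sum fun i _ => ?_)
  rw [abs_mul]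
  exact mul_le_mul_of_nonneg_right (abs_le.2 ⟨by linarith [(p.2 i).1], (p.2 i).2⟩) (abs_nonneg _)

/-- the penalty `α(Q)` can equivalently be computed by taking the supremum
only over return functions of positions. -/
theorem stmt7 (N : ℕ) (hN : 1 ≤ N) (b : Fin N → ℝ) (hb : ∀ i, 0 < b i)
    (pmax : ℝ) (hpmax : 0 < pmax) (v : Fin N → ℝ → ℝ)
    (Q : Measure (Omega N pmax)) (hQ : IsProbabilityMeasure Q) :
    alphaPen N b pmax v Q =
      ⨆ S ∈ {S : ℝ × (Fin N → ℝ) | IsPosition N b S},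
        (((∫ p, -(ret N pmax S p) ∂Q : ℝ) : EReal) - rho N b pmax v (ret N pmax S)) := by
  classical
  set R : EReal := ⨆ S ∈ {S : ℝ × (Fin N → ℝ) | IsPosition N b S},
        (((∫ p, -(ret N pmax S p) ∂Q : ℝ) : EReal) - rho N b pmax v (ret N pmax S)) with hRdef
  refine le_antisymm ?_ ?_
  · unfold alphaPen
    refine iSup₂_le fun X hX => ?_
    obtain ⟨hXm, C, hC⟩ := hX
    set a : ℝ := ∫ p, -X p ∂Q with ha
    have hXint : Integrable (fun p => -X p) Q :=
      ⟨(hXm.neg).aestronglyMeasurable, HasFiniteIntegral.of_bounded (C := C)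
        (ae_of_all _ fun p => by simpa [Real.norm_eq_abs, abs_neg] using hC p)⟩
    set A : Set EReal := {t : EReal | ∃ S : ℝ × (Fin N → ℝ), IsPosition N b S ∧
      (∀ p, ret N pmax S p ≤ X p) ∧ t = ((theta N v S : ℝ) : EReal)} with hAdef
    have hrho : rho N b pmax v X = sInf A := rfl
    have key : ∀ t ∈ A, (a : EReal) - t ≤ R := by
      rintro t ⟨S, hS, hle, rfl⟩
      obtain ⟨D, hD⟩ := ret_bounded N pmax hpmax S
      have hSint : Integrable (fun p => -(ret N pmax S p)) Q :=
        ⟨((ret_measurable N pmax S).neg).aestronglyMeasurable,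
          HasFiniteIntegral.of_bounded (C := D)
          (ae_of_all _ fun p => by simpa [Real.norm_eq_abs, abs_neg] using hD p)⟩
      have hab : a ≤ ∫ p, -(ret N pmax S p) ∂Q :=
        integral_mono hXint hSint fun p => neg_le_neg (hle p)
      have hρ : rho N b pmax v (ret N pmax S) ≤ ((theta N v S : ℝ) : EReal) :=
        sInf_le ⟨S, hS, fun p => le_rfl, rfl⟩
      have h1 : (a : EReal) - ((theta N v S : ℝ) : EReal) ≤
          ((∫ p, -(ret N pmax S p) ∂Q : ℝ) : EReal) - rho N b pmax v (ret N pmax S) :=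
        EReal.sub_le_sub (EReal.coe_le_coe_iff.2 hab) hρ
      exact h1.trans (le_iSup₂_of_le S hS le_rfl)
    rw [hrho]
    rcases Set.eq_empty_or_nonempty A with hA | hA
    · rw [hA, sInf_empty, EReal.sub_top]
      exact bot_le
    · rcases eq_or_ne (sInf A) ⊥ with hbot | hbot
      · have hRtop : R = ⊤ := by
          rw [EReal.eq_top_iff_forall_lt]
          intro y
          have hlt : sInf A < ((a - y - 1 : ℝ) : EReal) := hbot ▸ EReal.bot_lt_coe _
          obtain ⟨t, htA, htlt⟩ := sInf_lt_iff.1 hlt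
          obtain ⟨S, hS, hle, rfl⟩ := htA
          have hθ : theta N v S < a - y - 1 := EReal.coe_lt_coe_iff.1 htlt
          have h2 := key _ ⟨S, hS, hle, rfl⟩
          rw [← EReal.coe_sub] at h2
          exact lt_of_lt_of_le (EReal.coe_lt_coe_iff.2 (by linarith)) h2
        rw [hRtop]; exact le_top
      · obtain ⟨t0, ht0⟩ := hA
        have hnetop : sInf A ≠ ⊤ := by
          obtain ⟨S0, hS0, hle0, rfl⟩ := ht0
          have hmem : ((theta N v S0 : ℝ) : EReal) ∈ A := ⟨S0, hS0, hle0, rfl⟩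
          exact ((sInf_le hmem).trans_lt (EReal.coe_lt_top _)).ne
        obtain ⟨r, hr⟩ : ∃ r : ℝ, sInf A = (r : EReal) :=
          ⟨(sInf A).toReal, (EReal.coe_toReal hnetop hbot).symm⟩
        rw [hr, ← EReal.coe_sub]
        by_contra hcon
        push_neg at hcon
        have hRnetop : R ≠ ⊤ := hcon.trans_le le_top |>.ne
        have hRnebot : R ≠ ⊥ := by
          intro hb'
          obtain ⟨S0, hS0, hle0, rfl⟩ := ht0
          have h2 := key _ ⟨S0, hS0, hle0, rfl⟩
          rw [← EReal.coe_sub, hb', le_bot_iff] at h2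
          exact EReal.coe_ne_bot _ h2
        obtain ⟨c, hc⟩ : ∃ c : ℝ, R = (c : EReal) :=
          ⟨R.toReal, (EReal.coe_toReal hRnetop hRnebot).symm⟩
        rw [hc] at hcon
        have hcr : c < a - r := EReal.coe_lt_coe_iff.1 hcon
        have hlt : sInf A < ((r + (a - r - c) / 2 : ℝ) : EReal) := by
          rw [hr]; exact EReal.coe_lt_coe_iff.2 (by linarith)
        obtain ⟨t, htA, htlt⟩ := sInf_lt_iff.1 hlt
        obtain ⟨S, hS, hle, rfl⟩ := htA
        have hθ : theta N v S < r + (a - r - c) / 2 := EReal.coe_lt_coe_iff.1 htlt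
        have h2 := key _ ⟨S, hS, hle, rfl⟩
        rw [← EReal.coe_sub, hc] at h2
        have : a - theta N v S ≤ c := EReal.coe_le_coe_iff.1 h2
        linarith
  · rw [hRdef]
    unfold alphaPen
    refine iSup₂_le fun S hS => ?_
    have hmem : ret N pmax S ∈ {X : Omega N pmax → ℝ | Measurable X ∧ Bounded N pmax X} :=
      ⟨ret_measurable N pmax S, ret_bounded N pmax hpmax S⟩
    exact le_iSup₂_of_le (ret N pmax S) hmem le_rfl
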